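/- Assume that every character of [0..σ] occurs in the circular string T and that M^r_T ≠ ∅. Then the number of runs of the Burrows–Wheeler transform of T satisfies r_T ≥ |[0..σ] \ ∪_{W ∈ M^r_T} Σ^ℓ_T(W)| + Σ_{W ∈ M^r_T} |Σ^ℓ_T(W)| − |M^r_T| + 1. -/

import Mathlib

/-! Basic definitions: strings are lists of naturals; the separator `#` is `0`;
the alphabet is `Σ = [1..σ]`. Occurrences are taken in the circular version of `T`. -/

noncomputable section
open Classical

/-- `T` is a string over the alphabet `[1..σ]` followed by the separator `# = 0`
(so `#` occurs in `T` exactly once, at the last position). -/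
def Wellformed (σ : ℕ) (T : List ℕ) : Prop :=
  ∃ S : List ℕ, T = S ++ [0] ∧ ∀ c ∈ S, 1 ≤ c ∧ c ≤ σ

/-- The rotation of `T` starting at position `i`. -/
def rot (T : List ℕ) (i : ℕ) : List ℕ := T.drop i ++ T.take i

/-- `W` occurs at position `i` of the circular version of `T`. -/
def CircOccAt (T W : List ℕ) (i : ℕ) : Prop :=
  ∀ j < W.length, W.getD j 0 = T.getD ((i + j) % T.length) 0

/-- `𝒫_T(W)`: the set of starting positions of occurrences of `W` in the circular
version of `T`. -/
def Pset (T W : List ℕ) : Finset ℕ :=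
  (Finset.range T.length).filter (fun i => CircOccAt T W i)

/-- `W` occurs in the circular version of `T`. -/
def OccursCirc (T W : List ℕ) : Prop := (Pset T W).Nonempty

/-- `Σ^ℓ_T(W)`: the set of characters `a` such that `aW` occurs in circular `T`. -/
def SigmaL (T W : List ℕ) : Finset ℕ :=
  T.toFinset.filter (fun a => OccursCirc T (a :: W))

/-- `Σ^r_T(W)`: the set of characters `b` such that `Wb` occurs in circular `T`. -/
def SigmaR (T W : List ℕ) : Finset ℕ :=
  T.toFinset.filter (fun b => OccursCirc T (W ++ [b]))

/-- `W` is left-maximal in `T`. -/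
def LeftMaximal (T W : List ℕ) : Prop := 1 < (SigmaL T W).card

/-- `W` is right-maximal in `T`. -/
def RightMaximal (T W : List ℕ) : Prop := 1 < (SigmaR T W).card

/-- The (finite) collection of substrings of the circular version of `T`. -/
def circSubstrings (T : List ℕ) : Finset (List ℕ) :=
  ((Finset.range T.length) ×ˢ (Finset.range (T.length + 1))).image
    (fun p => (rot T p.1).take p.2)

/-- `ℳ_T`: the set of nonempty maximal repeats of `T`, i.e. repeats that are both
left-maximal and right-maximal.  (Every maximal repeat occurs in circular `T` and has
length at most `|T|`, so it belongs to `circSubstrings T`.) -/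
def MaxRepeats (T : List ℕ) : Finset (List ℕ) :=
  (circSubstrings T).filter
    (fun W => W ≠ [] ∧ 1 < (Pset T W).card ∧ LeftMaximal T W ∧ RightMaximal T W)

/-- Strict lexicographic comparison of strings (a proper prefix is smaller). -/
def lexLt : List ℕ → List ℕ → Bool
  | [], [] => false
  | [], _ :: _ => true
  | _ :: _, [] => false
  | a :: A, b :: B => decide (a < b) || (a == b && lexLt A B)

/-- Non-strict lexicographic comparison. -/
def lexLe (A B : List ℕ) : Bool := !(lexLt B A)

/-- The Burrows–Wheeler transform of `T`: the `i`-th character of `BWT T` is the last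
character of the lexicographically `i`-th rotation of `T`. -/
def BWT (T : List ℕ) : List ℕ :=
  (((List.range T.length).map (rot T)).mergeSort lexLe).map (fun R => R.getLast!)

/-- The number of runs of a string, i.e. the number of maximal intervals on which all
characters are equal. -/
def numRuns : List ℕ → ℕ
  | [] => 0
  | [_] => 1
  | a :: b :: l => (if a = b then 0 else 1) + numRuns (b :: l)


noncomputable section
open Classical

/-- `ℳ^r_T`: the set of rightmost maximal repeats of `T`: maximal repeats `W` such that
no string `WV` with `V` nonempty is left-maximal in `T`. -/
def RightmostMaxRepeats (T : List ℕ) : Finset (List ℕ) :=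
  (MaxRepeats T).filter (fun W => ∀ V : List ℕ, V ≠ [] → ¬ LeftMaximal T (W ++ V))

/-- `Y` is the shortest right-maximal extension of `X` in `T`: the shortest
right-maximal string of `T` having `X` as a prefix. -/
def ShortestRightMaxExt (T X Y : List ℕ) : Prop :=
  X <+: Y ∧ RightMaximal T Y ∧
    ∀ Z : List ℕ, X <+: Z → RightMaximal T Z → Y.length ≤ Z.length

/-- `ℱ^r_T`: pairs `(V, b)` with `V ∈ ℳ_T ∪ {ε}` and `b ∈ Σ^r_T(V)` such that either
`Vb` occurs exactly once in circular `T`, or the shortest right-maximal extension of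
`Vb` is not a maximal repeat of `T`.  These pairs correspond to the suffix-tree edges
of `T` from maximal-repeat nodes to non-maximal-repeat nodes. -/
def Fr (T : List ℕ) : Finset (List ℕ × ℕ) :=
  ((insert ([] : List ℕ) (MaxRepeats T)) ×ˢ T.toFinset).filter
    (fun p => p.2 ∈ SigmaR T p.1 ∧
      ((Pset T (p.1 ++ [p.2])).card = 1 ∨
        ∀ Y : List ℕ, ShortestRightMaxExt T (p.1 ++ [p.2]) Y → Y ∉ MaxRepeats T))

/-- `e_T`: the number of right extensions of maximal repeats of `T`, i.e. the number of
pairs `(V, b)` with `V ∈ ℳ_T ∪ {ε}` and `b ∈ Σ^r_T(V)`.  This equals the number of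
arcs of the CDAWG of `T`. -/
def eCount (T : List ℕ) : ℕ :=
  ∑ V ∈ insert ([] : List ℕ) (MaxRepeats T), (SigmaR T V).card

/-- The next LZ77 factor, to be placed at position `k` of `T`, may be `F` if `F` is a
single character (every single character of `T` has a source among the `σ+1` distinct
characters virtually preceding `T`), or if `F` has an occurrence in `T` starting at a
position `j` strictly before `k`. -/
def LZsource (T : List ℕ) (k : ℕ) (F : List ℕ) : Prop :=
  F.length = 1 ∨ ∃ j, j < k ∧ F <+: T.drop j

/-- `fs` is the LZ77 factorization of `T` (greedy: each factor is the longest prefix of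
the remaining suffix admitting a source). -/
def IsLZ77 (T : List ℕ) (fs : List (List ℕ)) : Prop :=
  fs.flatten = T ∧ (∀ F ∈ fs, F ≠ []) ∧
    ∀ i, (h : i < fs.length) →
      LZsource T ((fs.take i).flatten).length (fs.get ⟨i, h⟩) ∧
      ∀ F' : List ℕ, F' <+: T.drop ((fs.take i).flatten).length →
        (fs.get ⟨i, h⟩).length < F'.length →
          ¬ LZsource T ((fs.take i).flatten).length F'

/-- `N_T(X)`: the number of rotations of `T` lexicographically smaller than `X`. -/
def Nrank (T X : List ℕ) : ℕ :=
  ((List.range T.length).filter (fun i => lexLt (rot T i) X)).length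

/-- The string `a b a² b a³ b ⋯ aˣ b #`. -/
def Tx (a b x : ℕ) : List ℕ :=
  (((List.range x).map (fun i => List.replicate (i + 1) a ++ [b])).flatten) ++ [0]

end

section AuxProof
open Classical

/-! ## Auxiliary lemmas -/

section Aux

-- lex order basics
lemma lexLt_irrefl : ∀ A, lexLt A A = false := by
  intro A; induction A with
  | nil => rfl
  | cons a A ih => simp [lexLt, ih]

lemma lexLt_trans : ∀ A B C, lexLt A B = true → lexLt B C = true → lexLt A C = true := by
  intro A
  induction A with
  | nil =>
    intro B C h1 h2
    cases B with
    | nil => simp [lexLt] at h1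
    | cons b B =>
      cases C with
      | nil => simp [lexLt] at h2
      | cons c C => simp [lexLt]
  | cons a A ih =>
    intro B C h1 h2
    cases B with
    | nil => simp [lexLt] at h1
    | cons b B =>
      cases C with
      | nil => simp [lexLt] at h2
      | cons c C =>
        simp [lexLt] at h1 h2 ⊢
        rcases h1 with h1 | ⟨rfl, h1⟩
        · rcases h2 with h2 | ⟨rfl, h2⟩
          · exact Or.inl (h1.trans h2)
          · exact Or.inl h1
        · rcases h2 with h2 | ⟨rfl, h2⟩
          · exact Or.inl h2
          · exact Or.inr ⟨rfl, ih _ _ h1 h2⟩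

lemma lexLt_connex : ∀ A B, lexLt A B = false → lexLt B A = false → A = B := by
  intro A
  induction A with
  | nil =>
    intro B h1 _
    cases B with
    | nil => rfl
    | cons b B => simp [lexLt] at h1
  | cons a A ih =>
    intro B h1 h2
    cases B with
    | nil => simp [lexLt] at h2
    | cons b B =>
      simp [lexLt] at h1 h2
      have : a = b := by omega
      subst this
      simp_all
      exact ih _ h1 h2

lemma lexLe_trans : ∀ (a b c : List ℕ), lexLe a b = true → lexLe b c = true → lexLe a c = true := by
  intro a b c h1 h2
  simp only [lexLe, Bool.not_eq_true', Bool.not_eq_eq_eq_not, Bool.not_true] at h1 h2 ⊢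
  by_contra h
  replace h : lexLt c a = true := by
    cases hv : lexLt c a <;> simp [hv] at h ⊢
  rcases Bool.eq_false_or_eq_true (lexLt a b) with hab | hab
  case _ =>
    have := lexLt_trans _ _ _ h hab
    rw [this] at h2; exact absurd h2 (by simp)
  case _ =>
    have := lexLt_connex _ _ hab h1
    subst this
    rw [h] at h2; exact absurd h2 (by simp)


lemma lexLe_total : ∀ (a b : List ℕ), (lexLe a b || lexLe b a) = true := by
  intro a b
  simp [lexLe]
  by_contra h
  simp [Bool.not_eq_false] at h
  obtain ⟨h1, h2⟩ := h
  have := lexLt_trans _ _ _ h1 h2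
  rw [lexLt_irrefl] at this
  simp at this

lemma prefix_iff_getD (W L : List ℕ) :
    W <+: L ↔ (W.length ≤ L.length ∧ ∀ j, j < W.length → W.getD j 0 = L.getD j 0) := by
  constructor
  · intro h
    refine ⟨h.length_le, fun j hj => ?_⟩
    rw [List.getD_eq_getElem _ _ hj, List.getD_eq_getElem _ _ (lt_of_lt_of_le hj h.length_le)]
    exact h.getElem hj
  · rintro ⟨hlen, hj⟩
    rw [List.prefix_iff_eq_take]
    apply List.ext_getElem
    · simp [Nat.min_eq_left hlen]
    · intro n h1 h2
      have hn : n < W.length := h1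
      have := hj n hn
      rw [List.getD_eq_getElem _ _ hn, List.getD_eq_getElem _ _ (lt_of_lt_of_le hn hlen)] at this
      simpa [List.getElem_take] using this

lemma lex_sandwich : ∀ (W A B C : List ℕ), W.length ≤ B.length →
    W <+: A → W <+: C → lexLe A B = true → lexLe B C = true → W <+: B := by
  intro W
  induction W with
  | nil => intro A B C _ _ _ _ _; exact List.nil_prefix
  | cons w W ih =>
    intro A B C hlen hA hC hAB hBC
    obtain ⟨ta, hta⟩ := hA
    obtain ⟨tc, htc⟩ := hC
    cases B with
    | nil => simp at hlen
    | cons b B' =>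
      subst hta htc
      simp only [lexLe, Bool.not_eq_true', List.cons_append] at hAB hBC
      simp only [lexLt, Bool.or_eq_false_iff, Bool.and_eq_false_iff, decide_eq_false_iff_not,
        beq_eq_false_iff_ne, ne_eq] at hAB hBC
      have hbw : b = w := by omega
      subst hbw
      have h1 : lexLt B' (W ++ ta) = false := by
        rcases hAB.2 with h | h
        · simp at h
        · exact h
      have h2 : lexLt (W ++ tc) B' = false := by
        rcases hBC.2 with h | h
        · simp at h
        · exact h
      have : W <+: B' := by
        refine ih (W ++ ta) B' (W ++ tc) ?_ ⟨ta, rfl⟩ ⟨tc, rfl⟩ ?_ ?_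
        · simpa using Nat.le_of_succ_le_succ hlen
        · simp [lexLe, h1]
        · simp [lexLe, h2]
      exact List.cons_prefix_cons.mpr ⟨rfl, this⟩

-- rot basics
lemma rot_length (T : List ℕ) (i : ℕ) : (rot T i).length = T.length := by
  simp [rot]; omega

lemma rot_getD (T : List ℕ) (i j : ℕ) (hi : i < T.length) (hj : j < T.length) :
    (rot T i).getD j 0 = T.getD ((i + j) % T.length) 0 := by
  have hlen : (rot T i).length = T.length := rot_length T i
  have hmod : (i + j) % T.length < T.length := Nat.mod_lt _ (by omega)
  rw [List.getD_eq_getElem _ _ (show j < (rot T i).length by omega),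
      List.getD_eq_getElem _ _ hmod]
  unfold rot
  have hd : (T.drop i).length = T.length - i := by simp
  rw [List.getElem_append]
  split_ifs with h
  · rw [List.getElem_drop]
    congr 1
    rw [Nat.mod_eq_of_lt (by omega)]
  · rw [List.getElem_take]
    congr 1
    rw [Nat.mod_eq_sub_mod (by omega), Nat.mod_eq_of_lt (by omega)]
    omega

lemma circocc_iff_prefix (T W : List ℕ) (i : ℕ) (hi : i < T.length)
    (hW : W.length ≤ T.length) : CircOccAt T W i ↔ W <+: rot T i := by
  rw [prefix_iff_getD]
  have hlen : (rot T i).length = T.length := rot_length T i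
  constructor
  · intro h
    refine ⟨by omega, fun j hj => ?_⟩
    rw [rot_getD T i j hi (by omega)]
    exact h j hj
  · rintro ⟨_, h⟩
    intro j hj
    rw [← rot_getD T i j hi (by omega)]
    exact h j hj

lemma getLast!_eq (L : List ℕ) (h : L ≠ []) : L.getLast! = L.getD (L.length - 1) 0 := by
  rw [List.getLast!_of_getLast? (List.getLast?_eq_getLast h)]
  rw [List.getLast_eq_getElem]
  rw [List.getD_eq_getElem _ _ (by have := List.length_pos_iff.mpr h; omega)]

lemma getLast!_rot (T : List ℕ) (i : ℕ) (hn : 0 < T.length) (hi : i < T.length) :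
    (rot T i).getLast! = T.getD ((i + T.length - 1) % T.length) 0 := by
  have hlen : (rot T i).length = T.length := rot_length T i
  have hne : rot T i ≠ [] := by
    intro h; rw [h] at hlen; simp at hlen; omega
  rw [getLast!_eq _ hne, hlen, rot_getD T i (T.length - 1) hi (by omega)]
  congr 2
  omega

end Aux

section Occ

-- occurrence shifting
lemma occAt_cons (T W : List ℕ) (a j : ℕ) (hj : j < T.length)
    (h : CircOccAt T (a :: W) j) :
    CircOccAt T W ((j + 1) % T.length) ∧ T.getD j 0 = a := by
  constructor
  · intro k hk
    have := h (k + 1) (by simp; omega)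
    rw [List.getD_cons_succ] at this
    rw [this]
    congr 1
    rw [Nat.mod_add_mod]
    congr 1
    omega
  · have := h 0 (by simp)
    simp only [List.getD_cons_zero, Nat.add_zero] at this
    rw [this, Nat.mod_eq_of_lt hj]

lemma occAt_pred (T W : List ℕ) (i : ℕ) (hn : 0 < T.length) (hi : i < T.length)
    (h : CircOccAt T W i) :
    CircOccAt T (T.getD ((i + T.length - 1) % T.length) 0 :: W) ((i + T.length - 1) % T.length) := by
  set n := T.length with hn'
  have hjn : (i + n - 1) % n < n := Nat.mod_lt _ hn
  intro k hk
  match k with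
  | 0 =>
    simp only [List.getD_cons_zero, Nat.add_zero]
    rw [Nat.mod_eq_of_lt hjn]
  | (m + 1) =>
    simp only [List.getD_cons_succ]
    have hm : m < W.length := by simp at hk; omega
    rw [h m hm]
    congr 1
    rw [Nat.mod_add_mod]
    have : i + n - 1 + (m + 1) = i + m + n := by omega
    rw [this, Nat.add_mod_right]

end Occ

section SortedRot

variable (T : List ℕ)

def LS (T : List ℕ) : List (List ℕ) := ((List.range T.length).map (rot T)).mergeSort lexLe

lemma LS_length : (LS T).length = T.length := by
  simp [LS, List.length_mergeSort]

lemma LS_getD (p : ℕ) (hp : p < T.length) :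
    (LS T).getD p [] = (LS T)[p]'(by rw [LS_length]; exact hp) :=
  List.getD_eq_getElem _ _ _

lemma LS_mem (p : ℕ) (hp : p < T.length) : ∃ i < T.length, (LS T).getD p [] = rot T i := by
  rw [LS_getD T p hp]
  have hmem : (LS T)[p]'(by rw [LS_length]; exact hp) ∈ LS T := List.getElem_mem _
  have hmem2 : (LS T)[p]'(by rw [LS_length]; exact hp) ∈ (List.range T.length).map (rot T) :=
    List.mem_mergeSort.mp hmem
  rw [List.mem_map] at hmem2
  obtain ⟨i, hi, hrot⟩ := hmem2
  exact ⟨i, by simpa using hi, hrot.symm⟩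

lemma LS_mem' (i : ℕ) (hi : i < T.length) : ∃ p < T.length, (LS T).getD p [] = rot T i := by
  have hmem : rot T i ∈ LS T := by
    rw [show LS T = ((List.range T.length).map (rot T)).mergeSort lexLe from rfl,
      List.mem_mergeSort, List.mem_map]
    exact ⟨i, by simpa using hi, rfl⟩
  rw [List.mem_iff_getElem] at hmem
  obtain ⟨p, hp, hval⟩ := hmem
  have hp' : p < T.length := by rwa [LS_length] at hp
  exact ⟨p, hp', by rw [LS_getD T p hp']; exact hval⟩

lemma LS_sorted (p q : ℕ) (hpq : p ≤ q) (hq : q < T.length) :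
    lexLe ((LS T).getD p []) ((LS T).getD q []) = true := by
  have hp : p < T.length := lt_of_le_of_lt hpq hq
  rw [LS_getD T p hp, LS_getD T q hq]
  rcases eq_or_lt_of_le hpq with rfl | hlt
  · simp [lexLe, lexLt_irrefl]
  · have hsorted := List.pairwise_mergeSort lexLe_trans lexLe_total
      ((List.range T.length).map (rot T))
    rw [List.pairwise_iff_getElem] at hsorted
    exact hsorted p q
      (by rw [List.length_mergeSort, List.length_map, List.length_range]; exact hp)
      (by rw [List.length_mergeSort, List.length_map, List.length_range]; exact hq) hlt

lemma BWT_length : (BWT T).length = T.length := by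
  simp [BWT, List.length_mergeSort]

lemma BWT_getD (p : ℕ) (hp : p < T.length) :
    (BWT T).getD p 0 = ((LS T).getD p []).getLast! := by
  have hp' : p < (LS T).length := by rw [LS_length]; exact hp
  have : BWT T = (LS T).map (fun R => R.getLast!) := rfl
  rw [this, List.getD_eq_getElem _ _ (by simpa using hp'), List.getElem_map, LS_getD T p hp]

end SortedRot

section Runs

/-- the number of boundaries of `L`. -/
def bset (L : List ℕ) : Finset ℕ :=
  (Finset.range (L.length - 1)).filter (fun i => L.getD i 0 ≠ L.getD (i + 1) 0)

lemma numRuns_countP : ∀ (L : List ℕ), L ≠ [] →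
    numRuns L = 1 + (List.range (L.length - 1)).countP
      (fun i => decide (L.getD i 0 ≠ L.getD (i + 1) 0))
  | [], h => absurd rfl h
  | [a], _ => by simp [numRuns]
  | a :: b :: l, _ => by
    have ih := numRuns_countP (b :: l) (by simp)
    have hlen : (a :: b :: l).length - 1 = l.length + 1 := by simp
    rw [numRuns, ih, hlen, List.range_succ_eq_map, List.countP_cons, List.countP_map]
    have hmap : ((fun i => decide ((a :: b :: l).getD i 0 ≠ (a :: b :: l).getD (i + 1) 0)) ∘
        Nat.succ) = (fun i => decide ((b :: l).getD i 0 ≠ (b :: l).getD (i + 1) 0)) := by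
      funext i
      simp [List.getD_cons_succ]
    rw [hmap]
    simp only [List.getD_cons_succ, List.getD_cons_zero, List.length_cons, Nat.add_sub_cancel]
    by_cases hab : a = b <;> simp [hab] <;> omega

lemma numRuns_eq (L : List ℕ) (h : L ≠ []) : numRuns L = 1 + (bset L).card := by
  rw [numRuns_countP L h]
  congr 1
  rw [bset]
  simp [Finset.filter, Finset.card, Finset.range, Multiset.range, List.countP_eq_length_filter]

lemma chain_eq (L : List ℕ) (p q : ℕ) (hpq : p ≤ q)
    (h : ∀ i, p ≤ i → i < q → L.getD i 0 = L.getD (i + 1) 0) :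
    L.getD p 0 = L.getD q 0 := by
  induction q, hpq using Nat.le_induction with
  | base => rfl
  | succ n hn ih =>
    rw [ih (fun i hpi hin => h i hpi (by omega))]
    exact h n hn (by omega)

lemma exists_change (L : List ℕ) (p q : ℕ) (hpq : p ≤ q)
    (h : L.getD p 0 ≠ L.getD q 0) :
    ∃ i, p ≤ i ∧ i < q ∧ L.getD i 0 ≠ L.getD (i + 1) 0 := by
  by_contra hcon
  push_neg at hcon
  exact h (chain_eq L p q hpq (fun i hpi hiq => hcon i hpi hiq))

/-- distinct characters on a convex set of positions force boundaries inside it. -/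
lemma convex_card_le (L : List ℕ) (S : Finset ℕ) (hS : ∀ p ∈ S, p < L.length)
    (hconv : ∀ p q r, p ∈ S → r ∈ S → p ≤ q → q ≤ r → q ∈ S) :
    (S.image (fun p => L.getD p 0)).card ≤
      1 + ((bset L).filter (fun i => i ∈ S ∧ (i + 1) ∈ S)).card := by
  rcases S.eq_empty_or_nonempty with rfl | hSne
  · simp
  set m := S.min' hSne with hm_def
  have hm : m ∈ S := S.min'_mem hSne
  set c0 := L.getD m 0 with hc0_def
  set dom := (S.image (fun p => L.getD p 0)).erase c0 with hdom_def
  have key : ∀ c, ∃ b, c ∈ dom →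
      b ∈ (bset L).filter (fun i => i ∈ S ∧ (i + 1) ∈ S) ∧ L.getD (b + 1) 0 = c := by
    intro c
    by_cases hc : c ∈ dom
    · obtain ⟨hcne, hcim⟩ := Finset.mem_erase.mp hc
      rw [Finset.mem_image] at hcim
      obtain ⟨p0, hp0S, hp0c⟩ := hcim
      set sc := {p | p ∈ S ∧ L.getD p 0 = c} with hsc_def
      have hscne : sc.Nonempty := ⟨p0, hp0S, hp0c⟩
      set pc := sInf sc with hpc_def
      have hpc : pc ∈ S ∧ L.getD pc 0 = c := Nat.sInf_mem hscne
      have hmle : m ≤ pc := S.min'_le _ hpc.1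
      have hmne : m ≠ pc := by
        intro h
        exact hcne (by rw [← hpc.2, ← h])
      have hmlt : m < pc := lt_of_le_of_ne hmle hmne
      have hb1 : pc - 1 + 1 = pc := by omega
      have hbS : pc - 1 ∈ S := hconv m (pc - 1) pc hm hpc.1 (by omega) (by omega)
      have hbne : L.getD (pc - 1) 0 ≠ c := by
        intro h
        have : pc ≤ pc - 1 := Nat.sInf_le ⟨hbS, h⟩
        omega
      have hpclen : pc < L.length := hS pc hpc.1
      refine ⟨pc - 1, fun _ => ⟨?_, by rw [hb1]; exact hpc.2⟩⟩
      rw [Finset.mem_filter, bset, Finset.mem_filter, Finset.mem_range]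
      refine ⟨⟨by omega, by rw [hb1]; rw [hpc.2]; exact hbne⟩, hbS, by rw [hb1]; exact hpc.1⟩
    · exact ⟨0, fun h => absurd h hc⟩
  choose f hf using key
  have hcard : dom.card ≤ ((bset L).filter (fun i => i ∈ S ∧ (i + 1) ∈ S)).card := by
    apply Finset.card_le_card_of_injOn f (fun c hc => (hf c hc).1)
    intro c1 h1 c2 h2 heq
    have e1 := (hf c1 h1).2
    have e2 := (hf c2 h2).2
    rw [← e1, ← e2, heq]
  have hc0mem : c0 ∈ S.image (fun p => L.getD p 0) :=
    Finset.mem_image.mpr ⟨m, hm, rfl⟩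
  have := Finset.card_erase_of_mem hc0mem
  rw [hdom_def] at hcard
  omega

/-- distinct marked characters force boundaries adjacent to marked positions,
provided some unmarked position exists. -/
lemma marked_card_le (L : List ℕ) (U : Finset ℕ) (q : ℕ) (hq : q < L.length)
    (hqU : L.getD q 0 ∉ U) :
    (((Finset.range L.length).filter (fun p => L.getD p 0 ∈ U)).image
        (fun p => L.getD p 0)).card ≤
      ((bset L).filter (fun i => L.getD i 0 ∈ U ∨ L.getD (i + 1) 0 ∈ U)).card := by
  set dom := ((Finset.range L.length).filter (fun p => L.getD p 0 ∈ U)).image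
      (fun p => L.getD p 0) with hdom_def
  set Bd := (bset L).filter (fun i => L.getD i 0 ∈ U ∨ L.getD (i + 1) 0 ∈ U) with hBd_def
  have key : ∀ c, ∃ b, c ∈ dom → b ∈ Bd ∧
      ((b < q ∧ L.getD b 0 = c) ∨ (q ≤ b ∧ L.getD (b + 1) 0 = c)) := by
    intro c
    by_cases hc : c ∈ dom
    · rw [hdom_def, Finset.mem_image] at hc
      obtain ⟨p, hp, hpc⟩ := hc
      rw [Finset.mem_filter, Finset.mem_range] at hp
      obtain ⟨hplen, hpU⟩ := hp
      rw [hpc] at hpU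
      have hqc : L.getD q 0 ≠ c := by
        intro h; rw [h] at hqU; exact hqU hpU
      by_cases hcase : p < q
      · -- walk right from p towards q
        set sc := {i | p ≤ i ∧ L.getD i 0 ≠ L.getD (i + 1) 0} with hsc_def
        obtain ⟨i0, hi0p, hi0q, hi0c⟩ := exists_change L p q (le_of_lt hcase)
          (by rw [hpc]; exact fun hh => hqc hh.symm)
        have hscne : sc.Nonempty := ⟨i0, hi0p, hi0c⟩
        set b := sInf sc with hb_def
        have hb : p ≤ b ∧ L.getD b 0 ≠ L.getD (b + 1) 0 := Nat.sInf_mem hscne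
        have hble : b ≤ i0 := Nat.sInf_le ⟨hi0p, hi0c⟩
        have hbq : b < q := by omega
        have hchar : L.getD b 0 = c := by
          rw [← hpc]
          refine (chain_eq L p b hb.1 (fun i hpi hib => ?_)).symm
          by_contra hne
          have : b ≤ i := Nat.sInf_le ⟨hpi, hne⟩
          omega
        refine ⟨b, fun _ => ⟨?_, Or.inl ⟨hbq, hchar⟩⟩⟩
        rw [hBd_def, Finset.mem_filter, bset, Finset.mem_filter, Finset.mem_range]
        exact ⟨⟨by omega, hb.2⟩, Or.inl (by rw [hchar]; exact hpU)⟩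
      · -- q < p : walk left from p towards q
        have hqp : q < p := by
          rcases Nat.lt_or_ge q p with h | h
          · exact h
          · have : p = q ∨ p < q := by omega
            rcases this with rfl | h2
            · exact absurd hpc hqc
            · exact absurd h2 hcase
        set sc := {i | i < p ∧ q ≤ i ∧ L.getD i 0 ≠ L.getD (i + 1) 0} with hsc_def
        obtain ⟨i0, hi0q, hi0p, hi0c⟩ := exists_change L q p (le_of_lt hqp)
          (by rw [hpc]; exact hqc)
        have hscne : sc.Nonempty := ⟨i0, hi0p, hi0q, hi0c⟩
        have hbdd : BddAbove sc := ⟨p, fun x hx => le_of_lt hx.1⟩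
        set b := sSup sc with hb_def
        have hb : b < p ∧ q ≤ b ∧ L.getD b 0 ≠ L.getD (b + 1) 0 := Nat.sSup_mem hscne hbdd
        have hchar : L.getD (b + 1) 0 = c := by
          rw [← hpc]
          refine chain_eq L (b + 1) p (by omega) (fun i hbi hip => ?_)
          by_contra hne
          have : i ≤ b := le_csSup hbdd ⟨hip, by omega, hne⟩
          omega
        refine ⟨b, fun _ => ⟨?_, Or.inr ⟨hb.2.1, hchar⟩⟩⟩
        rw [hBd_def, Finset.mem_filter, bset, Finset.mem_filter, Finset.mem_range]
        exact ⟨⟨by have := hplen; omega, hb.2.2⟩, Or.inr (by rw [hchar]; exact hpU)⟩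
    · exact ⟨0, fun h => absurd h hc⟩
  choose f hf using key
  apply Finset.card_le_card_of_injOn f (fun c hc => (hf c hc).1)
  intro c1 h1 c2 h2 heq
  rcases (hf c1 h1).2 with ⟨hlt1, he1⟩ | ⟨hge1, he1⟩ <;>
    rcases (hf c2 h2).2 with ⟨hlt2, he2⟩ | ⟨hge2, he2⟩
  · rw [← he1, ← he2, heq]
  · rw [heq] at hlt1; omega
  · rw [heq] at hge1; omega
  · rw [← he1, ← he2, heq]

end Runs


section Bridge

lemma mod_shift (n j : ℕ) (hn : 0 < n) (hj : j < n) : ((j + 1) % n + n - 1) % n = j := by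
  have h1 : (j + 1) % n + n - 1 = (j + 1) % n + (n - 1) := by
    have := Nat.mod_lt (j + 1) hn
    omega
  rw [h1, Nat.mod_add_mod]
  have h2 : j + 1 + (n - 1) = j + n := by omega
  rw [h2, Nat.add_mod_right, Nat.mod_eq_of_lt hj]

/-- From an occurrence of `a :: W` we get a BWT position whose rotation has prefix `W`
and whose BWT character is `a`. -/
lemma occ_to_pos (T W : List ℕ) (a j : ℕ) (hn : 0 < T.length) (hj : j < T.length)
    (hW : W.length ≤ T.length) (hocc : CircOccAt T (a :: W) j) :
    ∃ p < T.length, W <+: (LS T).getD p [] ∧ (BWT T).getD p 0 = a := by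
  obtain ⟨hoccW, hchar⟩ := occAt_cons T W a j hj hocc
  set i := (j + 1) % T.length with hi_def
  have hi : i < T.length := Nat.mod_lt _ hn
  have hpre : W <+: rot T i := (circocc_iff_prefix T W i hi hW).mp hoccW
  obtain ⟨p, hp, hLS⟩ := LS_mem' T i hi
  refine ⟨p, hp, by rw [hLS]; exact hpre, ?_⟩
  rw [BWT_getD T p hp, hLS, getLast!_rot T i hn hi]
  rw [hi_def, mod_shift T.length j hn hj]
  exact hchar

/-- A BWT position whose rotation has prefix `W` has its character in `Σℓ(W)`. -/
lemma pos_to_SigmaL (T W : List ℕ) (p : ℕ) (hn : 0 < T.length) (hp : p < T.length)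
    (hW : W.length ≤ T.length) (hpre : W <+: (LS T).getD p []) :
    (BWT T).getD p 0 ∈ SigmaL T W := by
  obtain ⟨i, hi, hLS⟩ := LS_mem T p hp
  rw [hLS] at hpre
  have hocc : CircOccAt T W i := (circocc_iff_prefix T W i hi hW).mpr hpre
  set j := (i + T.length - 1) % T.length with hj_def
  have hj : j < T.length := Nat.mod_lt _ hn
  have hchar : (BWT T).getD p 0 = T.getD j 0 := by
    rw [BWT_getD T p hp, hLS, getLast!_rot T i hn hi]
  have hocc2 := occAt_pred T W i hn hi hocc
  rw [SigmaL, Finset.mem_filter]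
  constructor
  · rw [hchar, List.getD_eq_getElem _ _ hj]
    exact List.mem_toFinset.mpr (List.getElem_mem _)
  · refine ⟨j, ?_⟩
    rw [Pset, Finset.mem_filter, Finset.mem_range]
    rw [hchar]
    exact ⟨hj, hocc2⟩

end Bridge


section Main

/-- the BWT interval of `W` (as a set of ranks). -/
def IsetD (T W : List ℕ) : Finset ℕ :=
  (Finset.range T.length).filter (fun p => W <+: (LS T).getD p [])

/-- the boundaries internal to the interval of `W`. -/
def BInD (T W : List ℕ) : Finset ℕ :=
  (bset (BWT T)).filter (fun i => i ∈ IsetD T W ∧ (i + 1) ∈ IsetD T W)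

lemma mem_IsetD (T W : List ℕ) (p : ℕ) :
    p ∈ IsetD T W ↔ p < T.length ∧ W <+: (LS T).getD p [] := by
  rw [IsetD, Finset.mem_filter, Finset.mem_range]

lemma IsetD_char (T W : List ℕ) (hn : 0 < T.length) (hWlen : W.length ≤ T.length)
    (p : ℕ) (hp : p ∈ IsetD T W) : (BWT T).getD p 0 ∈ SigmaL T W := by
  rw [mem_IsetD] at hp
  exact pos_to_SigmaL T W p hn hp.1 hWlen hp.2

lemma SigmaL_subset_image (T W : List ℕ) (hn : 0 < T.length) (hWlen : W.length ≤ T.length) :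
    SigmaL T W ⊆ (IsetD T W).image (fun p => (BWT T).getD p 0) := by
  intro a ha
  rw [SigmaL, Finset.mem_filter] at ha
  obtain ⟨_, j, hj⟩ := ha
  rw [Pset, Finset.mem_filter, Finset.mem_range] at hj
  obtain ⟨p, hp, hpre, hchar⟩ := occ_to_pos T W a j hn hj.1 hWlen hj.2
  exact Finset.mem_image.mpr ⟨p, (mem_IsetD T W p).mpr ⟨hp, hpre⟩, hchar⟩

lemma IsetD_convex (T W : List ℕ) (hWlen : W.length ≤ T.length) :
    ∀ p q r, p ∈ IsetD T W → r ∈ IsetD T W → p ≤ q → q ≤ r → q ∈ IsetD T W := by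
  intro p q r hp hr hpq hqr
  rw [mem_IsetD] at hp hr ⊢
  have hq : q < T.length := lt_of_le_of_lt hqr hr.1
  refine ⟨hq, ?_⟩
  refine lex_sandwich W _ _ _ ?_ hp.2 hr.2 (LS_sorted T p q hpq hq) (LS_sorted T q r hqr hr.1)
  obtain ⟨i, hi, hLS⟩ := LS_mem T q hq
  rw [hLS, rot_length]
  exact hWlen

lemma card_SigmaL_le_BInD (T W : List ℕ) (hn : 0 < T.length) (hWlen : W.length ≤ T.length) :
    (SigmaL T W).card ≤ 1 + (BInD T W).card := by
  calc (SigmaL T W).card ≤ ((IsetD T W).image (fun p => (BWT T).getD p 0)).card :=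
      Finset.card_le_card (SigmaL_subset_image T W hn hWlen)
    _ ≤ 1 + (BInD T W).card := by
      have := convex_card_le (BWT T) (IsetD T W)
        (fun p hp => by rw [mem_IsetD] at hp; rw [BWT_length]; exact hp.1)
        (IsetD_convex T W hWlen)
      exact this

/-- facts about rightmost maximal repeats. -/
lemma Mr_facts (T W : List ℕ) (hW : W ∈ RightmostMaxRepeats T) :
    W.length ≤ T.length ∧ (Pset T W).Nonempty ∧ 1 < (SigmaL T W).card ∧
      (∀ V : List ℕ, V ≠ [] → ¬ LeftMaximal T (W ++ V)) := by
  rw [RightmostMaxRepeats, Finset.mem_filter] at hW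
  obtain ⟨hWmax, hrm⟩ := hW
  rw [MaxRepeats, Finset.mem_filter] at hWmax
  obtain ⟨hWsub, _, hrep, hlm, _⟩ := hWmax
  refine ⟨?_, Finset.card_pos.mp (by omega), hlm, hrm⟩
  rw [circSubstrings, Finset.mem_image] at hWsub
  obtain ⟨⟨p1, p2⟩, _, hWeq⟩ := hWsub
  rw [← hWeq]
  simp [List.length_take, rot_length]

lemma IsetD_disjoint (T : List ℕ) (W W' : List ℕ) (hW : W ∈ RightmostMaxRepeats T)
    (hW' : W' ∈ RightmostMaxRepeats T) (hne : W ≠ W') :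
    Disjoint (IsetD T W) (IsetD T W') := by
  rw [Finset.disjoint_left]
  intro p hp hp'
  rw [mem_IsetD] at hp hp'
  have key : ∀ A, A ∈ RightmostMaxRepeats T → ∀ B, B ∈ RightmostMaxRepeats T →
      A <+: B → A ≠ B → False := by
    intro A hA B hB hAB hABne
    obtain ⟨t, ht⟩ := hAB
    have htne : t ≠ [] := by rintro rfl; simp at ht; exact hABne ht
    have hBlm : LeftMaximal T B := by
      rw [RightmostMaxRepeats, Finset.mem_filter, MaxRepeats, Finset.mem_filter] at hB
      exact hB.1.2.2.2.1
    exact (Mr_facts T A hA).2.2.2 t htne (by rw [ht]; exact hBlm)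
  rcases List.prefix_or_prefix_of_prefix hp.2 hp'.2 with h | h
  · exact key W hW W' hW' h hne
  · exact key W' hW' W hW h (Ne.symm hne)

end Main


end AuxProof

/-- If every character of `[0..σ]` occurs in the circular string `T`
and `ℳ^r_T ≠ ∅`, then
`r_T ≥ |[0..σ] \ ⋃_{W ∈ ℳ^r_T} Σ^ℓ_T(W)| + ∑_{W ∈ ℳ^r_T} |Σ^ℓ_T(W)| − |ℳ^r_T| + 1`. -/
theorem runs_lower_bound (σ : ℕ) (T : List ℕ) (hT : Wellformed σ T)
    (hall : ∀ c, c ≤ σ → c ∈ T)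
    (hne : (RightmostMaxRepeats T).Nonempty) :
    ((Finset.range (σ + 1) \
        (RightmostMaxRepeats T).biUnion (fun W => SigmaL T W)).card : ℤ)
      + ∑ W ∈ RightmostMaxRepeats T, ((SigmaL T W).card : ℤ)
      - ((RightmostMaxRepeats T).card : ℤ) + 1
      ≤ (numRuns (BWT T) : ℤ) := by
  classical
  obtain ⟨S0, hS0, -⟩ := hT
  have hn : 0 < T.length := by rw [hS0]; simp
  have hLlen : (BWT T).length = T.length := BWT_length T
  have hLne : BWT T ≠ [] := by
    intro h
    rw [h] at hLlen
    simp at hLlen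
    omega
  -- abbreviations (plain terms)
  -- covered character set
  have hcovU : ∀ a, a ∈ (RightmostMaxRepeats T).biUnion (fun W => SigmaL T W) →
      a ∉ Finset.range (σ + 1) \ (RightmostMaxRepeats T).biUnion (fun W => SigmaL T W) := by
    intro a ha hmem
    exact (Finset.mem_sdiff.mp hmem).2 ha
  -- a covered BWT position q0
  obtain ⟨W0, hW0⟩ := hne
  obtain ⟨hW0len, ⟨j0, hj0⟩, -, -⟩ := Mr_facts T W0 hW0
  rw [Pset, Finset.mem_filter, Finset.mem_range] at hj0
  have hpre0 : W0 <+: rot T j0 := (circocc_iff_prefix T W0 j0 hj0.1 hW0len).mp hj0.2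
  obtain ⟨q0, hq0, hLS0⟩ := LS_mem' T j0 hj0.1
  have hq0I : q0 ∈ IsetD T W0 := (mem_IsetD T W0 q0).mpr ⟨hq0, by rw [hLS0]; exact hpre0⟩
  have hq0cov : (BWT T).getD q0 0 ∈ (RightmostMaxRepeats T).biUnion (fun W => SigmaL T W) :=
    Finset.mem_biUnion.mpr ⟨W0, hW0, IsetD_char T W0 hn hW0len q0 hq0I⟩
  have hq0U : (BWT T).getD q0 0 ∉
      Finset.range (σ + 1) \ (RightmostMaxRepeats T).biUnion (fun W => SigmaL T W) :=
    hcovU _ hq0cov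
  set U := Finset.range (σ + 1) \ (RightmostMaxRepeats T).biUnion (fun W => SigmaL T W)
    with hU_def
  -- every uncovered character occurs in the BWT
  have hUsub : U ⊆ ((Finset.range (BWT T).length).filter
      (fun p => (BWT T).getD p 0 ∈ U)).image (fun p => (BWT T).getD p 0) := by
    intro c hc
    have hcσ : c ≤ σ := by
      have := (Finset.mem_sdiff.mp hc).1
      rw [Finset.mem_range] at this
      omega
    obtain ⟨j, hj, hTj⟩ := List.mem_iff_getElem.mp (hall c hcσ)
    have hTjD : T.getD j 0 = c := by rw [List.getD_eq_getElem _ _ hj]; exact hTj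
    have hocc : CircOccAt T [c] j := by
      intro k hk
      have hk0 : k = 0 := by simp at hk; omega
      subst hk0
      simp only [List.getD_cons_zero, Nat.add_zero]
      rw [Nat.mod_eq_of_lt hj, hTjD]
    obtain ⟨p, hp, -, hchar⟩ := occ_to_pos T [] c j hn hj (by simp) hocc
    refine Finset.mem_image.mpr ⟨p, ?_, hchar⟩
    rw [Finset.mem_filter, Finset.mem_range, hLlen]
    exact ⟨hp, by rw [hchar]; exact hc⟩
  -- uncovered characters give boundaries adjacent to uncovered positions
  have hU_BU : U.card ≤ ((bset (BWT T)).filter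
      (fun i => (BWT T).getD i 0 ∈ U ∨ (BWT T).getD (i + 1) 0 ∈ U)).card := by
    calc U.card ≤ (((Finset.range (BWT T).length).filter
        (fun p => (BWT T).getD p 0 ∈ U)).image (fun p => (BWT T).getD p 0)).card :=
        Finset.card_le_card hUsub
      _ ≤ _ := marked_card_le (BWT T) U q0 (by rw [hLlen]; exact hq0) hq0U
  -- interval boundary counts
  have hBIn : ∀ W ∈ RightmostMaxRepeats T, (SigmaL T W).card ≤ 1 + (BInD T W).card :=
    fun W hW => card_SigmaL_le_BInD T W hn (Mr_facts T W hW).1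
  -- disjointness of interval boundary sets
  have hdisj : ∀ W ∈ RightmostMaxRepeats T, ∀ W' ∈ RightmostMaxRepeats T, W ≠ W' →
      Disjoint (BInD T W) (BInD T W') := by
    intro W hW W' hW' hne'
    have hI := IsetD_disjoint T W W' hW hW' hne'
    rw [Finset.disjoint_left] at hI ⊢
    intro i hi hi'
    rw [BInD, Finset.mem_filter] at hi hi'
    exact hI hi.2.1 hi'.2.1
  have hbi_card : ((RightmostMaxRepeats T).biUnion (fun W => BInD T W)).card =
      ∑ W ∈ RightmostMaxRepeats T, (BInD T W).card := Finset.card_biUnion hdisj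
  -- the interval boundaries are disjoint from the uncovered boundaries
  have hdisj2 : Disjoint ((RightmostMaxRepeats T).biUnion (fun W => BInD T W))
      ((bset (BWT T)).filter
        (fun i => (BWT T).getD i 0 ∈ U ∨ (BWT T).getD (i + 1) 0 ∈ U)) := by
    rw [Finset.disjoint_left]
    intro i hi hiU
    obtain ⟨W, hW, hiW⟩ := Finset.mem_biUnion.mp hi
    rw [BInD, Finset.mem_filter] at hiW
    have h1 : (BWT T).getD i 0 ∈ (RightmostMaxRepeats T).biUnion (fun W => SigmaL T W) :=
      Finset.mem_biUnion.mpr ⟨W, hW, IsetD_char T W hn (Mr_facts T W hW).1 i hiW.2.1⟩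
    have h2 : (BWT T).getD (i + 1) 0 ∈ (RightmostMaxRepeats T).biUnion (fun W => SigmaL T W) :=
      Finset.mem_biUnion.mpr ⟨W, hW, IsetD_char T W hn (Mr_facts T W hW).1 (i + 1) hiW.2.2⟩
    rcases (Finset.mem_filter.mp hiU).2 with h | h
    · exact hcovU _ h1 h
    · exact hcovU _ h2 h
  -- union bound
  have hsub : ((RightmostMaxRepeats T).biUnion (fun W => BInD T W)) ∪
      ((bset (BWT T)).filter
        (fun i => (BWT T).getD i 0 ∈ U ∨ (BWT T).getD (i + 1) 0 ∈ U)) ⊆ bset (BWT T) := by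
    intro i hi
    rcases Finset.mem_union.mp hi with h | h
    · obtain ⟨W, hW, hiW⟩ := Finset.mem_biUnion.mp h
      rw [BInD, Finset.mem_filter] at hiW
      exact hiW.1
    · exact (Finset.mem_filter.mp h).1
  have hcard_union : ((RightmostMaxRepeats T).biUnion (fun W => BInD T W)).card +
      ((bset (BWT T)).filter
        (fun i => (BWT T).getD i 0 ∈ U ∨ (BWT T).getD (i + 1) 0 ∈ U)).card ≤
      (bset (BWT T)).card := by
    rw [← Finset.card_union_of_disjoint hdisj2]
    exact Finset.card_le_card hsub
  have hruns : numRuns (BWT T) = 1 + (bset (BWT T)).card := numRuns_eq _ hLne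
  -- final arithmetic over ℤ
  have A1 : (∑ W ∈ RightmostMaxRepeats T, ((SigmaL T W).card : ℤ)) ≤
      ((RightmostMaxRepeats T).card : ℤ) +
        ∑ W ∈ RightmostMaxRepeats T, ((BInD T W).card : ℤ) := by
    have h : ∀ W ∈ RightmostMaxRepeats T,
        ((SigmaL T W).card : ℤ) ≤ 1 + ((BInD T W).card : ℤ) := by
      intro W hW
      exact_mod_cast hBIn W hW
    calc (∑ W ∈ RightmostMaxRepeats T, ((SigmaL T W).card : ℤ)) ≤
        ∑ W ∈ RightmostMaxRepeats T, (1 + ((BInD T W).card : ℤ)) := Finset.sum_le_sum h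
      _ = ((RightmostMaxRepeats T).card : ℤ) +
          ∑ W ∈ RightmostMaxRepeats T, ((BInD T W).card : ℤ) := by
        rw [Finset.sum_add_distrib, Finset.sum_const, nsmul_eq_mul, mul_one]
  have A2 : (∑ W ∈ RightmostMaxRepeats T, ((BInD T W).card : ℤ)) =
      (((RightmostMaxRepeats T).biUnion (fun W => BInD T W)).card : ℤ) := by
    rw [hbi_card]
    push_cast
    rfl
  have A3 : (U.card : ℤ) ≤ (((bset (BWT T)).filter
      (fun i => (BWT T).getD i 0 ∈ U ∨ (BWT T).getD (i + 1) 0 ∈ U)).card : ℤ) := by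
    exact_mod_cast hU_BU
  have A4 : ((((RightmostMaxRepeats T).biUnion (fun W => BInD T W)).card : ℤ) +
      (((bset (BWT T)).filter
        (fun i => (BWT T).getD i 0 ∈ U ∨ (BWT T).getD (i + 1) 0 ∈ U)).card : ℤ)) ≤
      ((bset (BWT T)).card : ℤ) := by
    exact_mod_cast hcard_union
  have A5 : (numRuns (BWT T) : ℤ) = 1 + ((bset (BWT T)).card : ℤ) := by
    rw [hruns]
    push_cast
    ring

  linarith
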